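/- Let c ∈ ℝ and K ≥ 0, and let μ : ℝ → ℝ be differentiable on [c, ∞) with μ(t) > 0 and |μ'(t)| ≤ K·μ(t)² for all t ∈ [c, ∞). Then the Lebesgue integral ∫_{[c,∞)} μ(s) ds diverges, i.e. equals +∞ (equivalently, μ is not integrable on [c, ∞)). -/

import Mathlib

open MeasureTheory Filter

/-- Appendix A, case `b = ∞`: a positive function on `[c, ∞)` whose derivative
satisfies `|μ'| ≤ K μ²` has infinite Lebesgue integral on `[c, ∞)`. -/
theorem stmt_1 (c K : ℝ) (hK : 0 ≤ K) (μ μ' : ℝ → ℝ)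
    (hderiv : ∀ t ∈ Set.Ici c, HasDerivAt μ (μ' t) t)
    (hpos : ∀ t ∈ Set.Ici c, 0 < μ t)
    (hbound : ∀ t ∈ Set.Ici c, |μ' t| ≤ K * μ t ^ 2) :
    ∫⁻ s in Set.Ici c, ENNReal.ofReal (μ s) = ⊤ := by
  set K₁ := K + 1 with hK₁def
  have hK₁pos : 0 < K₁ := by positivity
  have hμc : 0 < μ c := hpos c Set.self_mem_Ici
  set A := (μ c)⁻¹ with hAdef
  have hApos : 0 < A := inv_pos.mpr hμc
  -- positivity of the linear lower-bound denominator on `Ici c`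
  have hden : ∀ t ∈ Set.Ici c, 0 < A + K₁ * (t - c) := by
    intro t ht
    have htc : c ≤ t := Set.mem_Ici.mp ht
    have : 0 ≤ K₁ * (t - c) := mul_nonneg hK₁pos.le (by linarith)
    linarith
  -- Step 1: mean value bound on `1/μ`
  have hinv : ∀ t ∈ Set.Ici c, (μ t)⁻¹ ≤ A + K₁ * (t - c) := by
    intro t ht
    have htc : c ≤ t := Set.mem_Ici.mp ht
    have hmvt : ‖(μ t)⁻¹ - (μ c)⁻¹‖ ≤ K₁ * ‖t - c‖ := by
      refine (convex_Ici c).norm_image_sub_le_of_norm_hasDerivWithin_le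
        (f := fun s => (μ s)⁻¹) (f' := fun s => -μ' s / μ s ^ 2) (fun s hs => ?_) (fun s hs => ?_)
        Set.self_mem_Ici ht
      · exact (((hderiv s hs).inv (hpos s hs).ne')).hasDerivWithinAt
      · have hμs := hpos s hs
        rw [Real.norm_eq_abs, abs_div, abs_neg, abs_of_pos (by positivity : (0:ℝ) < μ s ^ 2)]
        rw [div_le_iff₀ (by positivity)]
        calc |μ' s| ≤ K * μ s ^ 2 := hbound s hs
          _ ≤ K₁ * μ s ^ 2 := by nlinarith
    have habs : (μ t)⁻¹ - (μ c)⁻¹ ≤ K₁ * (t - c) := by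
      have := (abs_le.mp (by simpa [Real.norm_eq_abs, abs_of_nonneg (by linarith : (0:ℝ) ≤ t - c)] using hmvt)).2
      linarith
    linarith
  -- Step 2: pointwise lower bound for μ
  have hlow : ∀ t ∈ Set.Ici c, (A + K₁ * (t - c))⁻¹ ≤ μ t := by
    intro t ht
    have h1 := hinv t ht
    have h2 := hpos t ht
    have h3 := hden t ht
    calc (A + K₁ * (t - c))⁻¹ ≤ ((μ t)⁻¹)⁻¹ :=
          inv_anti₀ (by positivity) h1
      _ = μ t := inv_inv _
  -- the antiderivative of the lower bound
  set F : ℝ → ℝ := fun x => K₁⁻¹ * Real.log (A + K₁ * (x - c)) with hFdef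
  have hF : ∀ x ∈ Set.Ici c, HasDerivAt F ((A + K₁ * (x - c))⁻¹) x := by
    intro x hx
    have h1 : HasDerivAt (fun y : ℝ => A + K₁ * (y - c)) K₁ x := by
      simpa using (((hasDerivAt_id x).sub_const c).const_mul K₁).const_add A
    have h2 := (h1.log (hden x hx).ne').const_mul K₁⁻¹
    rw [div_eq_mul_inv, ← mul_assoc, inv_mul_cancel₀ hK₁pos.ne', one_mul] at h2
    exact h2
  -- key inequality: for every x ≥ c, ofReal (F x - F c) ≤ the lintegral
  have key : ∀ x ∈ Set.Ici c, ENNReal.ofReal (F x - F c)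
      ≤ ∫⁻ s in Set.Ici c, ENNReal.ofReal (μ s) := by
    intro x hx
    have hsub : Set.uIcc c x ⊆ Set.Ici c := by
      rw [Set.uIcc_of_le hx]; exact Set.Icc_subset_Ici_self
    have hcont : ContinuousOn (fun s => (A + K₁ * (s - c))⁻¹) (Set.uIcc c x) := by
      refine ContinuousOn.inv₀ (by fun_prop) fun s hs => (hden s (hsub hs)).ne'
    have hintg : IntervalIntegrable (fun s => (A + K₁ * (s - c))⁻¹) volume c x :=
      hcont.intervalIntegrable
    have heq : F x - F c = ∫ s in c..x, (A + K₁ * (s - c))⁻¹ :=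
      (intervalIntegral.integral_eq_sub_of_hasDerivAt
        (fun s hs => hF s (hsub hs)) hintg).symm
    rw [heq, intervalIntegral.integral_of_le hx]
    have hIoc : Set.Ioc c x ⊆ Set.Ici c := Set.Ioc_subset_Icc_self.trans Set.Icc_subset_Ici_self
    calc ENNReal.ofReal (∫ s in Set.Ioc c x, (A + K₁ * (s - c))⁻¹)
        = ∫⁻ s in Set.Ioc c x, ENNReal.ofReal ((A + K₁ * (s - c))⁻¹) := by
          refine MeasureTheory.ofReal_integral_eq_lintegral_ofReal ?_ ?_
          · exact (intervalIntegrable_iff_integrableOn_Ioc_of_le hx).mp hintg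
          · refine ae_restrict_of_forall_mem measurableSet_Ioc fun s hs => ?_
            exact inv_nonneg.mpr (hden s (hIoc hs)).le
      _ ≤ ∫⁻ s in Set.Ioc c x, ENNReal.ofReal (μ s) := by
          refine setLIntegral_mono' measurableSet_Ioc fun s hs => ?_
          exact ENNReal.ofReal_le_ofReal (hlow s (hIoc hs))
      _ ≤ ∫⁻ s in Set.Ici c, ENNReal.ofReal (μ s) := lintegral_mono_set hIoc
  -- F x - F c tends to infinity
  have htend : Tendsto (fun x => F x - F c) atTop atTop := by
    have h1 : Tendsto (fun x : ℝ => A + K₁ * (x - c)) atTop atTop := by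
      apply tendsto_atTop_add_const_left
      exact (tendsto_atTop_add_const_right _ (-c) tendsto_id).const_mul_atTop hK₁pos
    have h2 : Tendsto (fun x => Real.log (A + K₁ * (x - c))) atTop atTop :=
      Real.tendsto_log_atTop.comp h1
    have h3 : Tendsto F atTop atTop := h2.const_mul_atTop (inv_pos.mpr hK₁pos)
    exact tendsto_atTop_add_const_right _ (-(F c)) h3
  refine ENNReal.eq_top_of_forall_nnreal_le fun r => ?_
  obtain ⟨x, hx1, hx2⟩ := ((htend.eventually_ge_atTop (r : ℝ)).and (eventually_ge_atTop c)).exists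
  calc (r : ENNReal) = ENNReal.ofReal (r : ℝ) := ENNReal.ofReal_coe_nnreal.symm
    _ ≤ ENNReal.ofReal (F x - F c) := ENNReal.ofReal_le_ofReal hx1
    _ ≤ _ := key x hx2
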